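/- Let N be a finitely generated normal subgroup of a group G, and assume N is residually simple: for every non-trivial element x of N there exist a finite non-abelian simple group S and a surjective homomorphism f : N → S with f(x) ≠ 1. Then N ∩ Φ_f(G) is trivial. -/

import Mathlib

open Subgroup

section Aux

variable {N S : Type*} [Group N] [Group S]

/-- A finitely generated group has finitely many homomorphisms to a finite group. -/
lemma aux_finite_monoidHom (hfg : Group.FG N) [Finite S] : Finite (N →* S) := by
  obtain ⟨T, hT1, hT2⟩ := Group.fg_iff.mp hfg
  haveI : Finite T := hT2
  refine Finite.of_injective (fun f => (fun t : T => f t)) ?_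
  intro f g h
  exact MonoidHom.eq_of_eqOn_dense hT1 (fun t ht => congrFun h ⟨t, ht⟩)

/-- Solvability passes to comap along an injective homomorphism. -/
lemma aux_solvable_comap {A B : Type*} [Group A] [Group B] (f : A →* B)
    (hf : Function.Injective f) (K : Subgroup B) (h : Group.IsSolvable K) :
    Group.IsSolvable (K.comap f) := by
  haveI := h
  refine solvable_of_solvable_injective (G' := ↥K) (f := f.subgroupComap K) ?_
  intro a b hab
  apply Subtype.ext
  exact hf (congrArg Subtype.val hab)

/-- Key lemma: in the quotient of `N` by the intersection of the kernels of all
surjections onto a fixed nonabelian finite simple group `S`, every solvable normal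
subgroup is trivial. -/
lemma aux_key (hS : IsSimpleGroup S) (hcomm : ¬ ∀ a b : S, a * b = b * a)
    (K : Subgroup N) [K.Normal]
    (hle : ∀ g : N →* S, Function.Surjective g → K ≤ g.ker)
    (hinf : ∀ n : N, (∀ g : N →* S, Function.Surjective g → g n = 1) → n ∈ K)
    (B : Subgroup (N ⧸ K)) (hB : B.Normal) (hsolv : Group.IsSolvable B) : B = ⊥ := by
  haveI := hS
  have key : ∀ (g : N →* S) (hg : Function.Surjective g),
      B ≤ (QuotientGroup.lift K g (hle g hg)).ker := by
    intro g hg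
    set gbar := QuotientGroup.lift K g (hle g hg) with hgbar
    have hgs : Function.Surjective gbar := by
      intro s; obtain ⟨n, rfl⟩ := hg s; exact ⟨QuotientGroup.mk n, QuotientGroup.lift_mk' _ _ _⟩
    have hmapn : (B.map gbar).Normal := hB.map gbar hgs
    rcases hmapn.eq_bot_or_eq_top with h | h
    · rwa [Subgroup.map_eq_bot_iff] at h
    · exfalso
      have hsurj : Function.Surjective (gbar.comp B.subtype) := by
        intro s
        have : s ∈ B.map gbar := h ▸ Subgroup.mem_top s
        obtain ⟨b, hb, rfl⟩ := this
        exact ⟨⟨b, hb⟩, rfl⟩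
      haveI := hsolv
      have : Group.IsSolvable S := solvable_of_surjective hsurj
      exact hcomm ((IsSimpleGroup.comm_iff_isSolvable).mpr this)
  rw [eq_bot_iff]
  intro b hb
  obtain ⟨n, rfl⟩ := QuotientGroup.mk_surjective b
  have hn : n ∈ K := by
    refine hinf n (fun g hg => ?_)
    have := key g hg hb
    rwa [MonoidHom.mem_ker, QuotientGroup.lift_mk'] at this
  simpa [Subgroup.mem_bot] using (QuotientGroup.eq_one_iff n).mpr hn

end Aux

/-- `phiF G` is the intersection of all maximal subgroups of finite index in `G`
(equal to `G` itself, i.e. `⊤`, if there are no such subgroups). -/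
def phiF (G : Type*) [Group G] : Subgroup G :=
  ⨅ M ∈ {M : Subgroup G | IsCoatom M ∧ M.FiniteIndex}, M

/-- A group `N` is residually simple if every non-trivial element survives in
some finite non-abelian simple quotient. -/
def IsResiduallySimple (N : Type*) [Group N] : Prop :=
  ∀ x : N, x ≠ 1 → ∃ (S : Type) (_ : Group S), Finite S ∧ IsSimpleGroup S ∧
    (¬ ∀ a b : S, a * b = b * a) ∧ ∃ f : N →* S, Function.Surjective f ∧ f x ≠ 1

/-- If `N` is a finitely generated normal subgroup of `G` which is
residually simple, then `N ∩ Φ_f(G)` is trivial. -/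
theorem inf_phiF_eq_bot_of_residuallySimple {G : Type*} [Group G]
    (N : Subgroup G) [N.Normal] (hfg : Group.FG N)
    (hres : IsResiduallySimple N) :
    N ⊓ phiF G = ⊥ := by
  rw [eq_bot_iff]
  intro x hx
  rw [Subgroup.mem_inf] at hx
  obtain ⟨hxN, hxPhi⟩ := hx
  rw [Subgroup.mem_bot]
  by_contra hx1
  obtain ⟨S, _, hfin, hsimple, hcomm, f, hfsurj, hfx⟩ :=
    hres ⟨x, hxN⟩ (fun h => hx1 (congrArg Subtype.val h))
  haveI := hfin
  haveI := hsimple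
  -- the intersection of kernels of all surjections N → S
  haveI : Finite (↥N →* S) := aux_finite_monoidHom hfg
  set K_N : Subgroup ↥N := ⨅ g : {g : ↥N →* S // Function.Surjective g}, g.1.ker with hK_N
  haveI hK_N_norm : K_N.Normal := by
    constructor
    intro n hn g
    rw [hK_N, Subgroup.mem_iInf] at hn ⊢
    exact fun i => (MonoidHom.normal_ker i.1).conj_mem n (hn i) g
  have hK_N_le : ∀ (g : ↥N →* S), Function.Surjective g → K_N ≤ g.ker := by
    intro g hg
    exact iInf_le (fun g : {g : ↥N →* S // Function.Surjective g} => g.1.ker) ⟨g, hg⟩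
  have hK_N_inf : ∀ n : ↥N, (∀ g : ↥N →* S, Function.Surjective g → g n = 1) → n ∈ K_N := by
    intro n hn
    rw [hK_N, Subgroup.mem_iInf]
    exact fun i => hn i.1 i.2
  haveI hK_N_fi : K_N.FiniteIndex := by
    refine Subgroup.finiteIndex_iInf (fun i => ⟨?_⟩)
    rw [Subgroup.index_ker]
    exact Nat.card_ne_zero.mpr ⟨⟨1, 1, map_one _⟩, inferInstance⟩
  haveI hK_N_char : K_N.Characteristic := by
    rw [Subgroup.characteristic_iff_le_comap]
    intro φ
    rw [hK_N, Subgroup.comap_iInf]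
    refine le_iInf fun g => ?_
    have h1 : g.1.ker.comap φ.toMonoidHom = (g.1.comp φ.toMonoidHom).ker := by
      ext a; exact Iff.rfl
    rw [h1]
    exact iInf_le (fun g : {g : ↥N →* S // Function.Surjective g} => g.1.ker)
      ⟨g.1.comp φ.toMonoidHom, g.2.comp φ.surjective⟩
  -- K is normal in G
  set K : Subgroup G := K_N.map N.subtype with hK
  haveI hKnorm : K.Normal := inferInstance
  -- first quotient
  set π : G →* G ⧸ K := QuotientGroup.mk' K with hπ
  have hπs : Function.Surjective π := QuotientGroup.mk'_surjective K
  set W : Subgroup (G ⧸ K) := N.map π with hW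
  haveI hWnorm : W.Normal := Subgroup.Normal.map ‹N.Normal› π hπs
  -- mem K iff mem K_N
  have hmemK : ∀ n : ↥N, (n : G) ∈ K ↔ n ∈ K_N := by
    intro n
    constructor
    · rintro ⟨y, hy, hyn⟩
      have : y = n := Subtype.ext hyn
      rwa [← this]
    · intro hn; exact ⟨n, hn, rfl⟩
  -- θ : N →* W
  set θ : ↥N →* ↥W := π.subgroupMap N with hθ
  have hθs : Function.Surjective θ := π.subgroupMap_surjective N
  have hθker : θ.ker = K_N := by
    ext n
    rw [MonoidHom.mem_ker, ← hmemK n]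
    constructor
    · intro h
      have h2 : π (n : G) = 1 := congrArg Subtype.val h
      exact (QuotientGroup.eq_one_iff (n : G)).mp h2
    · intro h
      apply Subtype.ext
      show π (n : G) = 1
      exact (QuotientGroup.eq_one_iff (n : G)).mpr h
  haveI : θ.ker.FiniteIndex := by rw [hθker]; exact hK_N_fi
  haveI hWfin : Finite ↥W :=
    Finite.of_equiv _ (QuotientGroup.quotientKerEquivOfSurjective θ hθs).toEquiv
  -- iso between N ⧸ K_N and W
  set e : (↥N ⧸ K_N) ≃* ↥W :=
    (QuotientGroup.quotientMulEquivOfEq hθker.symm).trans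
      (QuotientGroup.quotientKerEquivOfSurjective θ hθs) with he
  -- key lemma instantiated
  have key : ∀ B : Subgroup (↥N ⧸ K_N), B.Normal → Group.IsSolvable B → B = ⊥ :=
    fun B hB hs => aux_key hsimple hcomm K_N hK_N_le hK_N_inf B hB hs
  -- the center of W is trivial
  have hcenterV : Subgroup.center (↥N ⧸ K_N) = ⊥ :=
    key _ inferInstance (isSolvable_of_comm (fun a b => Subtype.ext (Subgroup.mem_center_iff.mp b.2 a)))
  have hcenterW : Subgroup.center ↥W = ⊥ := by
    rw [eq_bot_iff]
    intro z hz
    have hz' : e.symm z ∈ Subgroup.center (↥N ⧸ K_N) := by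
      rw [Subgroup.mem_center_iff]
      intro v
      apply e.injective
      rw [map_mul, map_mul, e.apply_symm_apply]
      exact Subgroup.mem_center_iff.mp hz (e v)
    rw [hcenterV, Subgroup.mem_bot] at hz'
    have : z = e 1 := by rw [← hz', e.apply_symm_apply]
    rw [Subgroup.mem_bot, this, map_one]
  -- centralizer quotient
  haveI : Finite (MulAut ↥W) :=
    Finite.of_injective (fun (a : MulAut ↥W) => (a : ↥W → ↥W)) DFunLike.coe_injective
  set C : Subgroup (G ⧸ K) := (MulAut.conjNormal : G ⧸ K →* MulAut ↥W).ker with hC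
  haveI hCnorm : C.Normal := MonoidHom.normal_ker _
  haveI hCfi : C.FiniteIndex := by
    constructor
    rw [Subgroup.index_ker]
    exact Nat.card_ne_zero.mpr ⟨⟨1, 1, map_one _⟩, inferInstance⟩
  haveI hQfin : Finite ((G ⧸ K) ⧸ C) := inferInstance
  set π2 : (G ⧸ K) →* (G ⧸ K) ⧸ C := QuotientGroup.mk' C with hπ2
  have hπ2s : Function.Surjective π2 := QuotientGroup.mk'_surjective C
  -- membership in C means centralizing W
  have hmemC : ∀ w : ↥W, (w : G ⧸ K) ∈ C → w ∈ Subgroup.center ↥W := by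
    intro w hw
    rw [hC, MonoidHom.mem_ker] at hw
    rw [Subgroup.mem_center_iff]
    intro u
    have h1 : (MulAut.conjNormal (w : G ⧸ K)) u = u := by rw [hw]; rfl
    have h2 : ((MulAut.conjNormal (w : G ⧸ K)) u : G ⧸ K) = (w : G ⧸ K) * u * (w : G ⧸ K)⁻¹ :=
      MulAut.conjNormal_apply _ _
    apply Subtype.ext
    have h3 : ((u : ↥W) : G ⧸ K) = (w : G ⧸ K) * u * (w : G ⧸ K)⁻¹ := by rw [← h2, h1]
    show ((u * w : ↥W) : G ⧸ K) = ((w * u : ↥W) : G ⧸ K)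
    push_cast
    rw [mul_assoc] at h3
    calc (u : G ⧸ K) * w = ((w : G ⧸ K) * (u * (w : G ⧸ K)⁻¹)) * w := by rw [← h3]
    _ = (w : G ⧸ K) * u := by group
  -- x and its images
  have hx1W : π x ∈ W := ⟨x, hxN, rfl⟩
  have hx1 : π x ≠ 1 := by
    intro h
    rw [hπ] at h
    have : x ∈ K := (QuotientGroup.eq_one_iff x).mp h
    have : (⟨x, hxN⟩ : ↥N) ∈ K_N := (hmemK ⟨x, hxN⟩).mp this
    exact hfx (hK_N_le f hfsurj this)
  -- τ : W →* Q is injective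
  set τ : ↥W →* ((G ⧸ K) ⧸ C) := π2.comp W.subtype with hτ
  have hτinj : Function.Injective τ := by
    rw [injective_iff_map_eq_one]
    intro w hw
    have : (w : G ⧸ K) ∈ C := (QuotientGroup.eq_one_iff _).mp hw
    have := hmemC w this
    rwa [hcenterW, Subgroup.mem_bot] at this
  -- x2 is nontrivial
  have hx2 : π2 (π x) ≠ 1 := by
    intro h
    have : (⟨π x, hx1W⟩ : ↥W) ∈ τ.ker := by
      rw [MonoidHom.mem_ker]
      exact h
    rw [(MonoidHom.ker_eq_bot_iff τ).mpr hτinj, Subgroup.mem_bot] at this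
    exact hx1 (congrArg Subtype.val this)
  -- x2 is not in frattini Q
  have hfrat : π2 (π x) ∉ frattini ((G ⧸ K) ⧸ C) := by
    intro hmem
    set W2 : Subgroup ((G ⧸ K) ⧸ C) := W.map π2 with hW2
    haveI : W2.Normal := Subgroup.Normal.map hWnorm π2 hπ2s
    set B2 : Subgroup ((G ⧸ K) ⧸ C) := W2 ⊓ frattini ((G ⧸ K) ⧸ C) with hB2
    have hB2norm : B2.Normal := by
      constructor
      intro b hb g
      rw [hB2, Subgroup.mem_inf] at hb ⊢
      exact ⟨‹W2.Normal›.conj_mem b hb.1 g, (frattini _).normal_of_characteristic.conj_mem b hb.2 g⟩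
    haveI : Group.IsNilpotent ↥(frattini ((G ⧸ K) ⧸ C)) := frattini_nilpotent
    haveI hfratsolv : Group.IsSolvable ↥(frattini ((G ⧸ K) ⧸ C)) := inferInstance
    have hB2solv : Group.IsSolvable ↥B2 := by
      refine solvable_of_solvable_injective
        (G' := ↥(frattini ((G ⧸ K) ⧸ C))) (f := Subgroup.inclusion inf_le_right) ?_
      exact Subgroup.inclusion_injective _
    -- pull back to W
    set B_W : Subgroup ↥W := B2.comap τ with hB_W
    have hB_Wnorm : B_W.Normal := hB2norm.comap τ
    have hB_Wsolv : Group.IsSolvable ↥B_W := aux_solvable_comap τ hτinj B2 hB2solv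
    -- pull back to N ⧸ K_N
    set B_V : Subgroup (↥N ⧸ K_N) := B_W.comap e.toMonoidHom with hB_V
    have hB_Vnorm : B_V.Normal := hB_Wnorm.comap e.toMonoidHom
    have hB_Vsolv : Group.IsSolvable ↥B_V := aux_solvable_comap e.toMonoidHom e.injective B_W hB_Wsolv
    have hB_Vbot : B_V = ⊥ := key B_V hB_Vnorm hB_Vsolv
    have hB_Wbot : B_W = ⊥ := by
      rw [eq_bot_iff]
      intro w hw
      have h1 : e.symm w ∈ B_V := by
        rw [hB_V, Subgroup.mem_comap]
        show e (e.symm w) ∈ B_W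
        rwa [e.apply_symm_apply]
      rw [hB_Vbot, Subgroup.mem_bot] at h1
      have : w = e 1 := by rw [← h1, e.apply_symm_apply]
      rw [Subgroup.mem_bot, this, map_one]
    -- but x gives a nontrivial element of B_W
    have : (⟨π x, hx1W⟩ : ↥W) ∈ B_W := by
      rw [hB_W, Subgroup.mem_comap]
      refine Subgroup.mem_inf.mpr ⟨⟨π x, hx1W, rfl⟩, ?_⟩
      exact hmem
    rw [hB_Wbot, Subgroup.mem_bot] at this
    exact hx1 (congrArg Subtype.val this)
  -- extract a maximal subgroup avoiding x2
  have hexM : ∃ M : Subgroup ((G ⧸ K) ⧸ C), IsCoatom M ∧ π2 (π x) ∉ M := by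
    by_contra h
    push_neg at h
    apply hfrat
    show π2 (π x) ∈ ⨅ M ∈ {M : Subgroup ((G ⧸ K) ⧸ C) | IsCoatom M}, M
    rw [Subgroup.mem_iInf]
    intro M
    rw [Subgroup.mem_iInf]
    exact fun hM => h M hM
  obtain ⟨M, hMcoatom, hMx⟩ := hexM
  -- pull back M to G
  set φ : G →* ((G ⧸ K) ⧸ C) := π2.comp π with hφ
  have hφs : Function.Surjective φ := hπ2s.comp hπs
  set M' : Subgroup G := M.comap φ with hM'
  have hM'coatom : IsCoatom M' := Subgroup.isCoatom_comap_of_surjective hφs hMcoatom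
  haveI : M.FiniteIndex := inferInstance
  have hM'fi : M'.FiniteIndex := by
    constructor
    rw [hM', M.index_comap_of_surjective hφs]
    exact Subgroup.FiniteIndex.index_ne_zero
  -- contradiction with x ∈ phiF G
  have hxM' : x ∈ M' := by
    have h1 : x ∈ ⨅ M ∈ {M : Subgroup G | IsCoatom M ∧ M.FiniteIndex}, M := hxPhi
    rw [Subgroup.mem_iInf] at h1
    have h2 := h1 M'
    rw [Subgroup.mem_iInf] at h2
    exact h2 ⟨hM'coatom, hM'fi⟩
  exact hMx hxM'
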